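/- Let a, F: ℝ → ℝ with F' = a, let X = {X_1,…,X_N} ⊂ K_a with X_i = P(u_i, v_i), and let Q ∈ ℝ^{3×2}. Then for every i = 1,…,N, rank(A_X − Π^N(X_i)) ≤ rank(A_X − Π^N(Q)). In particular, if rank(A_X − Π^N(Q)) = 2 for some Q ∈ ℝ^{3×2}, then rank(A_X − Π^N(X_i)) ≤ 2 for all i. -/
import Mathlib


open Matrix

noncomputable section

/-- The map `P(u,v)` into `ℝ^{3×2}` from the paper. -/
def Pmat (a F : ℝ → ℝ) (u v : ℝ) : Matrix (Fin 3) (Fin 2) ℝ :=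
  !![u, v; a v, u; u * a v, u ^ 2 / 2 + F v]

/-- The ordered family `X` forms a `T_N` configuration. -/
def IsTNConfig {m n N : ℕ} (X : Fin N → Matrix (Fin m) (Fin n) ℝ) : Prop :=
  4 ≤ N ∧ Function.Injective X ∧
    (∀ i j, i ≠ j → (X i - X j).rank ≠ 1) ∧
    ∃ (B : Matrix (Fin m) (Fin n) ℝ) (C : Fin N → Matrix (Fin m) (Fin n) ℝ)
      (κ : Fin N → ℝ),
      (∀ i, 1 < κ i) ∧ (∀ i, (C i).rank = 1) ∧ (∑ i, C i = 0) ∧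
      ∀ i, X i = B + (∑ j ∈ Finset.univ.filter (fun j => j < i), C j) + κ i • C i

/-- The family `X` has an order (enumeration) that forms a `T_N` configuration. -/
def HasTNOrder {m n N : ℕ} (X : Fin N → Matrix (Fin m) (Fin n) ℝ) : Prop :=
  ∃ σ : Equiv.Perm (Fin N), IsTNConfig (X ∘ σ)

/-- The matrix `A_X - Π^N(Q) ∈ ℝ^{3 × 2N}`, with the `2N` columns indexed by
`Fin N ⊕ Fin N`: the first `N` columns are `(u_j, a(v_j), u_j a(v_j))ᵀ - (first column of Q)`
and the last `N` columns are `(v_j, u_j, u_j²/2 + F(v_j))ᵀ - (second column of Q)`. -/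
def AmatDiff (a F : ℝ → ℝ) {N : ℕ} (u v : Fin N → ℝ)
    (Q : Matrix (Fin 3) (Fin 2) ℝ) : Matrix (Fin 3) (Fin N ⊕ Fin N) ℝ :=
  Matrix.of fun i => Sum.elim
    (fun j => Pmat a F (u j) (v j) i 0 - Q i 0)
    (fun j => Pmat a F (u j) (v j) i 1 - Q i 1)

/-- For `X_i = P(u_i, v_i) ∈ K_a` and any `Q ∈ ℝ^{3×2}`, one has
`rank(A_X - Π^N(X_i)) ≤ rank(A_X - Π^N(Q))` for every `i`; in particular, if
`rank(A_X - Π^N(Q)) = 2` for some `Q`, then `rank(A_X - Π^N(X_i)) ≤ 2` for all `i`. -/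
theorem stmt_10 (a F : ℝ → ℝ)
    (hF : ∀ x : ℝ, HasDerivAt F (a x) x)
    {N : ℕ} (u v : Fin N → ℝ)
    (X : Fin N → Matrix (Fin 3) (Fin 2) ℝ)
    (hX : ∀ i, X i = Pmat a F (u i) (v i))
    (Q : Matrix (Fin 3) (Fin 2) ℝ) :
    (∀ i : Fin N, (AmatDiff a F u v (X i)).rank ≤ (AmatDiff a F u v Q).rank) ∧
      ((AmatDiff a F u v Q).rank = 2 →
        ∀ i : Fin N, (AmatDiff a F u v (X i)).rank ≤ 2) := by
  have h1 : ∀ i : Fin N,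
      (AmatDiff a F u v (X i)).rank ≤ (AmatDiff a F u v Q).rank := by
    intro i
    have key : AmatDiff a F u v (X i) =
        AmatDiff a F u v Q * Matrix.of (fun k l : Fin N ⊕ Fin N =>
          (if k = l then (1:ℝ) else 0) -
          if k = Sum.elim (fun _ => (Sum.inl i : Fin N ⊕ Fin N))
              (fun _ => (Sum.inr i : Fin N ⊕ Fin N)) l then 1 else 0) := by
      ext r l
      rw [Matrix.mul_apply]
      cases l with
      | inl j =>
        simp only [Matrix.of_apply, Sum.elim_inl, mul_sub, Finset.sum_sub_distrib,
          mul_ite, mul_one, mul_zero, Finset.sum_ite_eq', Finset.mem_univ, if_true]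
        simp [AmatDiff, hX]
      | inr j =>
        simp only [Matrix.of_apply, Sum.elim_inr, mul_sub, Finset.sum_sub_distrib,
          mul_ite, mul_one, mul_zero, Finset.sum_ite_eq', Finset.mem_univ, if_true]
        simp [AmatDiff, hX]
    rw [key]
    exact Matrix.rank_mul_le_left _ _
  exact ⟨h1, fun h i => h ▸ h1 i⟩
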